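/- arXiv:1503.06921 — 7 statements merged into one kernel-verified Lean document; each statement's English description precedes it below -/
import Mathlib

section
/- Let L be a lattice. For all elements p=(p₁,p₂) and q=(q₁,q₂) of L×L, the merging term of the bilattice duplicator evaluates as (p ∧ₖ (p ∨ₜ q)) ∨ₖ (q ∧ₖ (p ∧ₜ q)) = (p₁, q₂). In particular, applied to diagonal elements, the term v(x,y) = (x∧ₖ(x∨ₜy))∨ₖ(y∧ₖ(x∧ₜy)) satisfies v((a,a),(b,b)) = (a,b) for all a,b ∈ L, i.e. condition (M) holds for the bilattice duplicator. -/
/-- Truth join of the product bilattice `L ⊙ L`. -/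
def joinT {L : Type*} [Lattice L] (p q : L × L) : L × L := (p.1 ⊔ q.1, p.2 ⊓ q.2)

/-- Truth meet of the product bilattice `L ⊙ L`. -/
def meetT {L : Type*} [Lattice L] (p q : L × L) : L × L := (p.1 ⊓ q.1, p.2 ⊔ q.2)

/-- Knowledge join of the product bilattice `L ⊙ L`. -/
def joinK {L : Type*} [Lattice L] (p q : L × L) : L × L := (p.1 ⊔ q.1, p.2 ⊔ q.2)

/-- Knowledge meet of the product bilattice `L ⊙ L`. -/
def meetK {L : Type*} [Lattice L] (p q : L × L) : L × L := (p.1 ⊓ q.1, p.2 ⊓ q.2)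

/-- The merging term `v(x,y) = (x ∧ₖ (x ∨ₜ y)) ∨ₖ (y ∧ₖ (x ∧ₜ y))` of the bilattice
duplicator evaluates on `L ⊙ L` to `(p₁, q₂)`; in particular on diagonal elements it
satisfies `v((a,a),(b,b)) = (a,b)`, i.e. condition (M) holds. -/
theorem stmt2 {L : Type*} [Lattice L] :
    (∀ p q : L × L,
      joinK (meetK p (joinT p q)) (meetK q (meetT p q)) = (p.1, q.2)) ∧
    (∀ a b : L,
      joinK (meetK (a, a) (joinT (a, a) (b, b))) (meetK (b, b) (meetT (a, a) (b, b)))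
        = (a, b)) := by
  have h : ∀ p q : L × L,
      joinK (meetK p (joinT p q)) (meetK q (meetT p q)) = (p.1, q.2) := by
    intro p q
    simp only [joinK, meetK, joinT, meetT, Prod.mk.injEq]
    constructor
    · rw [inf_eq_left.2 le_sup_left]
      exact sup_eq_left.2 (inf_le_right.trans inf_le_left)
    · rw [inf_eq_left.2 (le_sup_right : q.2 ≤ p.2 ⊔ q.2)]
      exact sup_eq_right.2 (inf_le_right.trans inf_le_right)
  exact ⟨h, fun a b => h (a, a) (b, b)⟩
end

section
/- Let A be a set equipped with binary operations ∨ₜ, ∧ₜ, ∨ₖ, ∧ₖ and unary operations ¬ and − such that − is involutive, −(x∨ₜy)=−x∨ₜ−y, −(x∧ₜy)=−x∧ₜ−y, −(x∨ₖy)=−x∧ₖ−y, −(x∧ₖy)=−x∨ₖ−y, and −(¬x)=¬(−x) for all x,y ∈ A. Let h: A → Bool×Bool preserve ∨ₜ, ∧ₜ, ∨ₖ, ∧ₖ and ¬, where on Bool×Bool these operations are (a₁,a₂)∨ₜ(b₁,b₂)=(a₁∨b₁,a₂∧b₂), (a₁,a₂)∧ₜ(b₁,b₂)=(a₁∧b₁,a₂∨b₂),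 ∨ₖ and ∧ₖ componentwise, and ¬(a₁,a₂)=(a₂,a₁). Write h(c)=(h₁(c),h₂(c)), and define h': A → (Bool×Bool)×(Bool×Bool) by h'(c) = ((h₁(c), ¬h₂(−c)), (h₂(c), ¬h₁(−c))) (¬ denoting Boolean complement). Then h' preserves the six operations of the sixteen-element algebra S, namely: h'(x∨ₜy)=h'(x)∨ₜˢh'(y), h'(x∧ₜy)=h'(x)∧ₜˢh'(y), h'(x∨ₖy)=h'(x)∨ₖˢh'(y), h'(x∧ₖy)=h'(x)∧ₖˢh'(y), h'(¬x)=¬ˢh'(x), and h'(−x)=−ˢh'(x). Moreover, if h(a)≠h(b) then h'(a)≠h'(b). -/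
/-- The four-element carrier `Bool × Bool`. -/
abbrev B2 := Bool × Bool

/-- Componentwise join on `Bool × Bool`. -/
def bJoin (a b : B2) : B2 := (a.1 || b.1, a.2 || b.2)

/-- Componentwise meet on `Bool × Bool`. -/
def bMeet (a b : B2) : B2 := (a.1 && b.1, a.2 && b.2)

/-- De Morgan negation `∼(a,b) = (¬b, ¬a)` on `Bool × Bool`. -/
def dmNeg (a : B2) : B2 := (!a.2, !a.1)

/-- Truth join on `Bool × Bool`: `(a₁,a₂) ∨ₜ (b₁,b₂) = (a₁∨b₁, a₂∧b₂)`. -/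
def bJoinT (a b : B2) : B2 := (a.1 || b.1, a.2 && b.2)

/-- Truth meet on `Bool × Bool`: `(a₁,a₂) ∧ₜ (b₁,b₂) = (a₁∧b₁, a₂∨b₂)`. -/
def bMeetT (a b : B2) : B2 := (a.1 && b.1, a.2 || b.2)

/-- Bilattice negation `¬(a₁,a₂) = (a₂,a₁)` on `Bool × Bool`. -/
def bNeg (a : B2) : B2 := (a.2, a.1)

/-- The sixteen-element carrier `(Bool × Bool) × (Bool × Bool)`. -/
abbrev S16 := B2 × B2

/-- Truth join of the sixteen-element algebra `S`. -/
def sJoinT (p q : S16) : S16 := (bJoin p.1 q.1, bMeet p.2 q.2)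

/-- Truth meet of the sixteen-element algebra `S`. -/
def sMeetT (p q : S16) : S16 := (bMeet p.1 q.1, bJoin p.2 q.2)

/-- Knowledge join of the sixteen-element algebra `S`. -/
def sJoinK (p q : S16) : S16 := (bJoin p.1 q.1, bJoin p.2 q.2)

/-- Knowledge meet of the sixteen-element algebra `S`. -/
def sMeetK (p q : S16) : S16 := (bMeet p.1 q.1, bMeet p.2 q.2)

/-- Negation of the sixteen-element algebra `S`. -/
def sNeg (p : S16) : S16 := (p.2, p.1)

/-- Conflation of the sixteen-element algebra `S`: `−ˢ(p,q) = (∼q, ∼p)`. -/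
def sConf (p : S16) : S16 := (dmNeg p.2, dmNeg p.1)

/-- Given an algebra `A` with bilattice operations and a commuting involutive conflation,
and a homomorphism `h : A → Bool × Bool` of the `−`-free reduct, the map
`h'(c) = ((h₁(c), ¬h₂(−c)), (h₂(c), ¬h₁(−c)))` is a homomorphism into the
sixteen-element algebra `S`, and it separates whatever `h` separates. -/
theorem stmt5 {A : Type*}
    (vt mt vk mk : A → A → A) (neg cf : A → A)
    (hcf_inv : ∀ x : A, cf (cf x) = x)
    (hcf_vt : ∀ x y : A, cf (vt x y) = vt (cf x) (cf y))
    (hcf_mt : ∀ x y : A, cf (mt x y) = mt (cf x) (cf y))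
    (hcf_vk : ∀ x y : A, cf (vk x y) = mk (cf x) (cf y))
    (hcf_mk : ∀ x y : A, cf (mk x y) = vk (cf x) (cf y))
    (hcf_neg : ∀ x : A, cf (neg x) = neg (cf x))
    (h : A → B2)
    (hvt : ∀ x y : A, h (vt x y) = bJoinT (h x) (h y))
    (hmt : ∀ x y : A, h (mt x y) = bMeetT (h x) (h y))
    (hvk : ∀ x y : A, h (vk x y) = bJoin (h x) (h y))
    (hmk : ∀ x y : A, h (mk x y) = bMeet (h x) (h y))
    (hneg : ∀ x : A, h (neg x) = bNeg (h x)) :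
    let h' : A → S16 := fun c =>
      (((h c).1, !(h (cf c)).2), ((h c).2, !(h (cf c)).1))
    (∀ x y : A, h' (vt x y) = sJoinT (h' x) (h' y)) ∧
    (∀ x y : A, h' (mt x y) = sMeetT (h' x) (h' y)) ∧
    (∀ x y : A, h' (vk x y) = sJoinK (h' x) (h' y)) ∧
    (∀ x y : A, h' (mk x y) = sMeetK (h' x) (h' y)) ∧
    (∀ x : A, h' (neg x) = sNeg (h' x)) ∧
    (∀ x : A, h' (cf x) = sConf (h' x)) ∧
    (∀ a b : A, h a ≠ h b → h' a ≠ h' b) := by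
  intro h'
  refine ⟨?_, ?_, ?_, ?_, ?_, ?_, ?_⟩
  · intro x y
    simp only [h', hvt, hcf_vt, sJoinT, bJoinT, bJoin, bMeet]
    simp [Bool.not_and, Bool.not_or]
  · intro x y
    simp only [h', hmt, hcf_mt, sMeetT, bMeetT, bJoin, bMeet]
    simp [Bool.not_and, Bool.not_or]
  · intro x y
    simp only [h', hvk, hcf_vk, hmk, sJoinK, bJoin, bMeet]
    simp [Bool.not_and, Bool.not_or]
  · intro x y
    simp only [h', hmk, hcf_mk, hvk, sMeetK, bJoin, bMeet]
    simp [Bool.not_and, Bool.not_or]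
  · intro x
    simp [h', hneg, hcf_neg, sNeg, bNeg]
  · intro x
    simp [h', hcf_inv, sConf, dmNeg]
  · intro a b hab h'eq
    apply hab
    have h1 := congrArg (fun p : S16 => p.1.1) h'eq
    have h2 := congrArg (fun p : S16 => p.2.1) h'eq
    simp only [h'] at h1 h2
    exact Prod.ext h1 h2
end

section
/- Let L be a bounded lattice and suppose imp: (L×L) → (L×L) → (L×L) is a residuum of the knowledge meet: for all p,q,r ∈ L×L, p ∧ₖ q ≤ₖ r if and only if q ≤ₖ imp p r, where ∧ₖ is the componentwise meet and ≤ₖ the componentwise order on L×L. Define a ⇨ c := the first component of imp (a,⊥) (c,⊥), for a,c ∈ L. Then: (i) for all a,b,c ∈ L, a ∧ b ≤ c if and only if b ≤ a ⇨ c (so ⇨ makes L a Heyting algebra); and (ii) for all a,b,c,d ∈ L, imp (a,b) (c,d) = (a ⇨ c, b ⇨ d). -/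
/-- Let `L` be a bounded lattice and suppose `imp` is a residuum of the knowledge meet on
`L × L` (the componentwise meet, with the componentwise order).  Then
`a ⇨ c := (imp (a,⊥) (c,⊥)).1` is a Heyting implication on `L`, and `imp` acts
componentwise: `imp (a,b) (c,d) = (a ⇨ c, b ⇨ d)`. -/
theorem stmt6 {L : Type*} [Lattice L] [BoundedOrder L]
    (imp : L × L → L × L → L × L)
    (hres : ∀ p q r : L × L, p ⊓ q ≤ r ↔ q ≤ imp p r) :
    (∀ a b c : L, a ⊓ b ≤ c ↔ b ≤ (imp (a, ⊥) (c, ⊥)).1) ∧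
    (∀ a b c d : L,
      imp (a, b) (c, d) = ((imp (a, ⊥) (c, ⊥)).1, (imp (b, ⊥) (d, ⊥)).1)) := by
  have key : ∀ a b c : L, a ⊓ b ≤ c ↔ b ≤ (imp (a, ⊥) (c, ⊥)).1 := by
    intro a b c
    constructor
    · intro h
      have := (hres (a, ⊥) (b, ⊥) (c, ⊥)).mp (by
        constructor
        · simpa using h
        · simp)
      exact this.1
    · intro h
      have hself : (a, (⊥ : L)) ⊓ imp (a, ⊥) (c, ⊥) ≤ (c, ⊥) :=
        (hres (a, ⊥) (imp (a, ⊥) (c, ⊥)) (c, ⊥)).mpr le_rfl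
      have h1 : a ⊓ (imp (a, ⊥) (c, ⊥)).1 ≤ c := hself.1
      exact le_trans (inf_le_inf_left a h) h1
  refine ⟨key, ?_⟩
  intro a b c d
  have hself : (a, b) ⊓ imp (a, b) (c, d) ≤ (c, d) :=
    (hres (a, b) (imp (a, b) (c, d)) (c, d)).mpr le_rfl
  apply le_antisymm
  · have h1 : (imp (a, b) (c, d)).1 ≤ (imp (a, ⊥) (c, ⊥)).1 :=
      (key a _ c).mp hself.1
    have h2 : (imp (a, b) (c, d)).2 ≤ (imp (b, ⊥) (d, ⊥)).1 :=
      (key b _ d).mp hself.2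
    exact ⟨h1, h2⟩
  · apply (hres (a, b) _ (c, d)).mp
    exact ⟨(key a _ c).mpr le_rfl, (key b _ d).mpr le_rfl⟩
end

section
/- Let L be a bounded lattice and suppose imp: (L×L) → (L×L) → (L×L) is a residuum of the truth meet: for all p,q,r ∈ L×L, p ∧ₜ q ≤ₜ r if and only if q ≤ₜ imp p r, where (a₁,a₂)∧ₜ(b₁,b₂)=(a₁∧b₁, a₂∨b₂) and (a₁,a₂)≤ₜ(b₁,b₂) iff a₁≤b₁ and b₂≤a₂. Define a ⇨ c := the first component of imp (a,⊤) (c,⊤), and c ∖ a := the second component of imp (⊥,a) (⊥,c), for a,c ∈ L. Then: (i) for all a,b,c ∈ L, a ∧ b ≤ c if and only if b ≤ a ⇨ c; and (ii) for all a,b,c ∈ L, c ≤ a ∨ b if and only if c ∖ a ≤ b. In particular L carries both a Heyting implication and a co-Heyting difference, i.e. L is a bi-Heyting algebra. -/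
/-- Truth order on `L × L`. -/
def leT {L : Type*} [Lattice L] (p q : L × L) : Prop := p.1 ≤ q.1 ∧ q.2 ≤ p.2

/-- Let `L` be a bounded lattice and suppose `imp` is a residuum of the truth meet on
`L × L` (with respect to the truth order).  Then `a ⇨ c := (imp (a,⊤) (c,⊤)).1` is a
Heyting implication on `L` and `c ∖ a := (imp (⊥,a) (⊥,c)).2` is a co-Heyting
difference on `L`; in particular `L` is a bi-Heyting algebra. -/
theorem stmt7 {L : Type*} [Lattice L] [BoundedOrder L]
    (imp : L × L → L × L → L × L)
    (hres : ∀ p q r : L × L, leT (meetT p q) r ↔ leT q (imp p r)) :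
    (∀ a b c : L, a ⊓ b ≤ c ↔ b ≤ (imp (a, ⊤) (c, ⊤)).1) ∧
    (∀ a b c : L, c ≤ a ⊔ b ↔ (imp (⊥, a) (⊥, c)).2 ≤ b) := by
  constructor
  · intro a b c
    have h := hres (a, ⊤) (b, ⊤) (c, ⊤)
    simpa [leT, meetT] using h
  · intro a b c
    have h := hres (⊥, a) (⊥, b) (⊥, c)
    simpa [leT, meetT] using h
end

section
/- Let Σ be a first-order language having only function symbols, let A be a Σ-structure, and let Γ, n, t₁, t₂ be duplication data with duplicated structure P_Γ(A) on A×A. Assume: (M-condition) there is a binary L_Γ-term v with v realized in P_Γ(A) at ((a,b),(c,d)) equal to (a,d) for all a,b,c,d ∈ A; (S-condition) there is a unary L_Γ-term s with s realized in P_Γ(A) at (a,b) equal to (b,a) for all a,b ∈ A; and (W-condition) for every n-ary function symbol f of Σ there is an n-ary L_Γ-term w_f with w_f realized in P_Γ(A) at ((a₁,b₁),…,(aₙ,bₙ)) equal to (f^A(a₁,…,aₙ), f^A(b₁,…,bₙ)). Then every subset S ⊆ A×A that is closed under all operations of P_Γ(A) satisfies S = C × C, where C is the image of S under the first projection; moreover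 C is closed under all Σ-operations of A (i.e. C is the universe of a Σ-substructure and S is the universe of an L_Γ-substructure isomorphic to the duplicate of that substructure). -/
open FirstOrder FirstOrder.Language

/-- The language `Σ` with function symbols `F` (indexed by arity) and no relation
symbols. -/
def Sig (F : ℕ → Type*) : Language := ⟨F, fun _ => Empty⟩

/-- The duplicated language `L_Γ`: one function symbol of arity `k` for each `γ : Γ k`,
and no other symbols. -/
def LGam (Γ : ℕ → Type*) : Language := ⟨Γ, fun _ => Empty⟩

/-- The variable assignment sending, for `x : Fin k → A × A`, the `(2i)`-th (0-based)
variable to the first component of `x i` and the `(2i+1)`-st variable to its second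
component. -/
def assignDup {A : Type*} {k : ℕ} (x : Fin k → A × A) : Fin (2 * k) → A :=
  fun j =>
    if j.val % 2 = 0 then (x ⟨j.val / 2, by have := j.isLt; omega⟩).1
    else (x ⟨j.val / 2, by have := j.isLt; omega⟩).2

/-- Interpretation of the duplicated symbol `γ` on `A × A`: the pair of the realizations
of `t₁ γ` and `t₂ γ` in `A` under the duplicating variable assignment. -/
def dupFun {F Γ : ℕ → Type*} {A : Type*} [(Sig F).Structure A]
    (t₁ t₂ : ∀ {k : ℕ}, Γ k → (Sig F).Term (Fin (2 * k)))
    {k : ℕ} (γ : Γ k) (x : Fin k → A × A) : A × A :=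
  ((t₁ γ).realize (assignDup x), (t₂ γ).realize (assignDup x))

/-- The duplicated structure `P_Γ(A)` on `A × A`. -/
def dupStructure {F Γ : ℕ → Type*}
    (t₁ t₂ : ∀ {k : ℕ}, Γ k → (Sig F).Term (Fin (2 * k)))
    (A : Type*) [(Sig F).Structure A] : (LGam Γ).Structure (A × A) where
  funMap := fun γ x => dupFun t₁ t₂ γ x
  RelMap := fun r _ => r.elim

/-- Realization of an `L_Γ`-term in the duplicated structure `P_Γ(A)`. -/
def dupRealize {F Γ : ℕ → Type*}
    (t₁ t₂ : ∀ {k : ℕ}, Γ k → (Sig F).Term (Fin (2 * k)))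
    (A : Type*) [(Sig F).Structure A] {α : Type*} (env : α → A × A)
    (t : (LGam Γ).Term α) : A × A :=
  letI := dupStructure t₁ t₂ A
  t.realize env


/-- Let `Σ` have only function symbols, `A` a `Σ`-structure, and `Γ, t₁, t₂` duplication
data.  Assume the M-condition (a binary `L_Γ`-term merging pairs), the S-condition (a
unary `L_Γ`-term swapping coordinates) and the W-condition (terms realizing `f × f`).
Then every subset `S ⊆ A × A` closed under all operations of `P_Γ(A)` satisfies
`S = C × C` where `C` is the first-projection image of `S`, and `C` is closed under all
`Σ`-operations of `A` (so `C` is the universe of a `Σ`-substructure and `S` is the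
universe of an `L_Γ`-substructure isomorphic to its duplicate). -/
theorem stmt13 {F Γ : ℕ → Type*} {A : Type*} [(Sig F).Structure A]
    (t₁ t₂ : ∀ {k : ℕ}, Γ k → (Sig F).Term (Fin (2 * k)))
    (hM : ∃ v : (LGam Γ).Term (Fin 2),
      ∀ a b c d : A, dupRealize t₁ t₂ A ![(a, b), (c, d)] v = (a, d))
    (hS : ∃ s : (LGam Γ).Term (Fin 1),
      ∀ a b : A, dupRealize t₁ t₂ A ![(a, b)] s = (b, a))
    (hW : ∀ {k : ℕ} (f : F k), ∃ w : (LGam Γ).Term (Fin k),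
      ∀ a b : Fin k → A,
        dupRealize t₁ t₂ A (fun i => (a i, b i)) w =
          (Structure.funMap (L := Sig F) f a, Structure.funMap (L := Sig F) f b))
    (S : Set (A × A))
    (hclosed : ∀ {k : ℕ} (γ : Γ k) (x : Fin k → A × A),
      (∀ i, x i ∈ S) → dupFun t₁ t₂ γ x ∈ S) :
    S = (Prod.fst '' S) ×ˢ (Prod.fst '' S) ∧
    (∀ {k : ℕ} (f : F k) (as : Fin k → A),
      (∀ i, as i ∈ Prod.fst '' S) →
        Structure.funMap (L := Sig F) f as ∈ Prod.fst '' S) := by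
  obtain ⟨v, hv⟩ := hM
  obtain ⟨s, hs⟩ := hS
  -- term closure
  have hterm : ∀ {α : Type} (t : (LGam Γ).Term α) (env : α → A × A),
      (∀ i, env i ∈ S) → dupRealize t₁ t₂ A env t ∈ S := by
    intro α t
    induction t with
    | var i => intro env h; exact h i
    | func γ ts ih =>
        intro env h
        exact hclosed γ _ (fun i => ih i env h)
  have hswap : ∀ p ∈ S, (p.2, p.1) ∈ S := by
    intro p hp
    have := hterm s ![p] (by intro i; fin_cases i <;> simpa using hp)
    rwa [show (![p] : Fin 1 → A × A) = ![(p.1, p.2)] by simp, hs p.1 p.2] at this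
  have hmerge : ∀ p ∈ S, ∀ q ∈ S, (p.1, q.2) ∈ S := by
    intro p hp q hq
    have := hterm v ![p, q] (by intro i; fin_cases i <;> simp_all)
    rwa [show (![p, q] : Fin 2 → A × A) = ![(p.1, p.2), (q.1, q.2)] by simp,
      hv p.1 p.2 q.1 q.2] at this
  have hCC : S = (Prod.fst '' S) ×ˢ (Prod.fst '' S) := by
    ext ⟨a, b⟩
    constructor
    · intro h
      exact ⟨⟨(a, b), h, rfl⟩, ⟨(b, a), hswap _ h, rfl⟩⟩
    · rintro ⟨⟨p, hp, hp1⟩, ⟨q, hq, hq1⟩⟩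
      have hq' := hswap q hq
      have := hmerge p hp _ hq'
      simpa [hp1, hq1] using this
  refine ⟨hCC, ?_⟩
  intro k f as has
  obtain ⟨w, hw⟩ := hW f
  have hdiag : ∀ i, (as i, as i) ∈ S := by
    intro i
    rw [hCC]
    exact ⟨has i, has i⟩
  have := hterm w (fun i => (as i, as i)) hdiag
  rw [hw as as] at this
  exact ⟨_, this, rfl⟩
end

section
/- Let Σ be a first-order language having only function symbols, let A be a Σ-structure, and let Γ, n, t₁, t₂ be duplication data with duplicated structure P_Γ(A) on A×A. Let D be an L_Γ-structure and g: P_Γ(A) → D an L_Γ-homomorphism, and define q: A → D by q(a) := g(a,a). Assume the (W-condition): for every m-ary function symbol f of Σ there is an m-ary L_Γ-term w_f with w_f realized in P_Γ(A) at ((a₁,b₁),…,(a_m,b_m)) equal to (f^A(a₁,…,a_m), f^A(b₁,…,b_m)). Then: (i) the kernel of q is compatible with every Σ-operation, i.e. for every m-ary function symbol f of Σ and all a₁,…,a_m, b₁,…,b_m ∈ A with q(aᵢ) = q(bᵢ) for all i, one has q(f^A(a₁,…,a_m)) = q(f^A(b₁,…,b_m)); and (ii) if moreover there is a binary L_Γ-term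 v with v realized in P_Γ(A) at ((a,b),(c,d)) equal to (a,d) for all a,b,c,d ∈ A, then g(a,b) = v realized in D at (q(a), q(b)), for all a,b ∈ A; in particular g is determined by q. -/
open FirstOrder FirstOrder.Language

theorem g_realize {F Γ : ℕ → Type*} {A D : Type*}
    [(Sig F).Structure A] [(LGam Γ).Structure D]
    (t₁ t₂ : ∀ {k : ℕ}, Γ k → (Sig F).Term (Fin (2 * k)))
    (g : A × A → D)
    (hg : ∀ {k : ℕ} (γ : Γ k) (x : Fin k → A × A),
      g (dupFun t₁ t₂ γ x) = Structure.funMap (L := LGam Γ) γ (fun i => g (x i)))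
    {α : Type*} (env : α → A × A) (t : (LGam Γ).Term α) :
    g (dupRealize t₁ t₂ A env t) = t.realize (fun i => g (env i)) := by
  induction t with
  | var => rfl
  | func γ ts ih =>
      show g (dupFun t₁ t₂ γ (fun i => dupRealize t₁ t₂ A env (ts i))) = _
      refine (hg γ _).trans ?_
      simp only [Term.realize, ih]

/-- Let `Σ` have only function symbols, `A` a `Σ`-structure, `Γ, t₁, t₂` duplication
data, `D` an `L_Γ`-structure and `g : P_Γ(A) → D` an `L_Γ`-homomorphism; put
`q a := g (a,a)`.  Assume the W-condition (for each function symbol `f` of `Σ` an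
`L_Γ`-term realizing `f × f` in `P_Γ(A)`).  Then (i) the kernel of `q` is compatible
with every `Σ`-operation; and (ii) for every binary `L_Γ`-term `v` realizing
`((a,b),(c,d)) ↦ (a,d)` in `P_Γ(A)`, one has `g (a,b) = v^D(q a, q b)` for all
`a, b : A`; in particular `g` is determined by `q`. -/
theorem stmt14 {F Γ : ℕ → Type*} {A D : Type*}
    [(Sig F).Structure A] [(LGam Γ).Structure D]
    (t₁ t₂ : ∀ {k : ℕ}, Γ k → (Sig F).Term (Fin (2 * k)))
    (g : A × A → D)
    (hg : ∀ {k : ℕ} (γ : Γ k) (x : Fin k → A × A),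
      g (dupFun t₁ t₂ γ x) = Structure.funMap (L := LGam Γ) γ (fun i => g (x i)))
    (hW : ∀ {m : ℕ} (f : F m), ∃ w : (LGam Γ).Term (Fin m),
      ∀ a b : Fin m → A,
        dupRealize t₁ t₂ A (fun i => (a i, b i)) w =
          (Structure.funMap (L := Sig F) f a, Structure.funMap (L := Sig F) f b)) :
    (∀ {m : ℕ} (f : F m) (a b : Fin m → A),
      (∀ i, g (a i, a i) = g (b i, b i)) →
        g (Structure.funMap (L := Sig F) f a, Structure.funMap (L := Sig F) f a) =
          g (Structure.funMap (L := Sig F) f b, Structure.funMap (L := Sig F) f b)) ∧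
    (∀ v : (LGam Γ).Term (Fin 2),
      (∀ a b c d : A, dupRealize t₁ t₂ A ![(a, b), (c, d)] v = (a, d)) →
        ∀ a b : A, g (a, b) = v.realize ![g (a, a), g (b, b)]) := by
  have key : ∀ {α : Type} (env : α → A × A) (t : (LGam Γ).Term α),
      g (dupRealize t₁ t₂ A env t) = t.realize (fun i => g (env i)) :=
    fun env t => g_realize t₁ t₂ g hg env t
  constructor
  · intro m f a b h
    obtain ⟨w, hw⟩ := hW f
    rw [← hw a a, ← hw b b, key, key]
    congr 1
    funext i
    exact h i
  · intro v hv a b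
    have := hv a a b b
    rw [← this, key]
    congr 1
    funext i
    fin_cases i <;> rfl
end

section
/- Let L and M be lattices with L nonempty, and let ψ: L×L → M×M be a map preserving the five bilattice operations: ψ(x∨ₜy)=ψ(x)∨ₜψ(y), ψ(x∧ₜy)=ψ(x)∧ₜψ(y), ψ(x∨ₖy)=ψ(x)∨ₖψ(y), ψ(x∧ₖy)=ψ(x)∧ₖψ(y), and ψ(¬x)=¬ψ(x), where on each product the operations are those of L⊙L and M⊙M respectively. Then there exists a lattice homomorphism h: L → M such that ψ(a,b) = (h(a), h(b)) for all (a,b) ∈ L×L. -/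
/-- Negation of the product bilattice `L ⊙ L`. -/
def negB {L : Type*} (p : L × L) : L × L := (p.2, p.1)

/-- Every map `ψ : L × L → M × M` preserving the five bilattice operations of `L ⊙ L`
and `M ⊙ M` (with `L` nonempty) is of the form `ψ (a,b) = (h a, h b)` for a lattice
homomorphism `h : L → M`. -/
theorem stmt16 {L M : Type*} [Lattice L] [Lattice M] [Nonempty L]
    (ψ : L × L → M × M)
    (hvt : ∀ x y : L × L, ψ (joinT x y) = joinT (ψ x) (ψ y))
    (hmt : ∀ x y : L × L, ψ (meetT x y) = meetT (ψ x) (ψ y))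
    (hvk : ∀ x y : L × L, ψ (joinK x y) = joinK (ψ x) (ψ y))
    (hmk : ∀ x y : L × L, ψ (meetK x y) = meetK (ψ x) (ψ y))
    (hneg : ∀ x : L × L, ψ (negB x) = negB (ψ x)) :
    ∃ h : L → M,
      (∀ a b : L, h (a ⊔ b) = h a ⊔ h b) ∧
      (∀ a b : L, h (a ⊓ b) = h a ⊓ h b) ∧
      ∀ a b : L, ψ (a, b) = (h a, h b) := by
  set h : L → M := fun a => (ψ (a, a)).1 with hh
  -- on the diagonal, ψ has equal components
  have hd : ∀ a : L, ψ (a, a) = (h a, h a) := by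
    intro a
    have := hneg (a, a)
    simp only [negB] at this
    have h2 : (ψ (a, a)).2 = (ψ (a, a)).1 := congrArg Prod.fst this.symm
    exact Prod.ext rfl h2
  have hjoin : ∀ a b : L, h (a ⊔ b) = h a ⊔ h b := by
    intro a b
    have := hvk (a, a) (b, b)
    simp only [joinK, hd] at this
    exact congrArg Prod.fst this
  have hmeet : ∀ a b : L, h (a ⊓ b) = h a ⊓ h b := by
    intro a b
    have := hmk (a, a) (b, b)
    simp only [meetK, hd] at this
    exact congrArg Prod.fst this
  refine ⟨h, hjoin, hmeet, ?_⟩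
  intro a b
  have key : (a, b) =
      joinK (meetK (a, a) (joinT (a, a) (b, b)))
            (negB (meetK (b, b) (joinT (a, a) (b, b)))) := by
    refine Prod.ext ?_ ?_ <;>
      simp [joinK, meetK, joinT, negB, inf_sup_self, sup_inf_self, inf_assoc,
        inf_left_comm, inf_comm, sup_comm]
  calc ψ (a, b)
      = ψ (joinK (meetK (a, a) (joinT (a, a) (b, b)))
            (negB (meetK (b, b) (joinT (a, a) (b, b))))) := by rw [← key]
    _ = (h a, h b) := by
        simp only [hvk, hmk, hneg, hvt, hd]
        simp only [joinK, meetK, joinT, negB]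
        refine Prod.ext ?_ ?_ <;>
          simp [inf_sup_self, sup_inf_self, inf_assoc, inf_left_comm, inf_comm, sup_comm]
end
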